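/- Let F be a field, V an F-vector space, S a subspace of V, and α : Fin m → V a family of vectors whose images in V/S form a basis of V/S. Let c be an m × m matrix over F, let σ : Fin m → V be a family of vectors with σ j ∈ S for every j, and set γ j = σ j + Σᵢ (c i j) • (α i). Let ι : V → ExteriorAlgebra F V be the canonical inclusion, let I be the two-sided ideal of the exterior algebra ExteriorAlgebra F V generated by the set {ι(s) : s ∈ S}, and let π be the quotient map onto (ExteriorAlgebra F V)/I. Then π(ι(γ 0) · ι(γ 1) ⋯ ι(γ (m−1))) = det(c) • π(ι(α 0) · ι(α 1) ⋯ ι(α (m−1))); moreover, if det(c) ≠ 0 then this common element of the quotient is nonzero. -/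

import Mathlib

/-- Auxiliary: an alternating map applied to linear combinations given by a matrix. -/
private theorem alt_map_det {F M N : Type*} [Field F] [AddCommGroup M] [Module F M]
    [AddCommGroup N] [Module F N] {m : ℕ} (f : M [⋀^Fin m]→ₗ[F] N)
    (v : Fin m → M) (c : Matrix (Fin m) (Fin m) F) :
    (f fun j => ∑ i, c i j • v i) = c.det • f v := by
  classical
  let T : (Fin m → F) →ₗ[F] M := Fintype.linearCombination F v
  have key : f.compLinearMap T = Matrix.detRowAlternating.smulRight (f v) := by
    refine Module.Basis.ext_alternating (Pi.basisFun F (Fin m)) (fun u hu => ?_)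
    have hbij : Function.Bijective u := Finite.injective_iff_bijective.mp hu
    let σ : Equiv.Perm (Fin m) := Equiv.ofBijective u hbij
    have hσu : ⇑σ = u := rfl
    have hT : ∀ i, T (Pi.basisFun F (Fin m) (u i)) = v (u i) := by
      intro i
      simp [T, Fintype.linearCombination_apply, Pi.basisFun_apply, Pi.single_apply]
    have lhs : (f.compLinearMap T fun i => Pi.basisFun F (Fin m) (u i)) =
        Equiv.Perm.sign σ • f v := by
      rw [AlternatingMap.compLinearMap_apply]
      have : (fun i => T (Pi.basisFun F (Fin m) (u i))) = v ∘ σ := funext fun i => hT i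
      rw [this, f.map_perm]
    have hmat : (Matrix.of fun i => (Pi.basisFun F (Fin m) (u i) : Fin m → F)) =
        σ.permMatrix F := by
      ext i j
      simp [Matrix.of_apply, Pi.basisFun_apply, Pi.single_apply, Equiv.Perm.permMatrix,
        PEquiv.toMatrix_apply, Equiv.toPEquiv_apply, σ, eq_comm]
    have rhs : (Matrix.detRowAlternating.smulRight (f v) fun i => Pi.basisFun F (Fin m) (u i)) =
        Equiv.Perm.sign σ • f v := by
      rw [AlternatingMap.smulRight_apply]
      have : (Matrix.detRowAlternating fun i => (Pi.basisFun F (Fin m) (u i) : Fin m → F)) =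
          Matrix.det (σ.permMatrix F) := by
        rw [← hmat]; rfl
      rw [this, Matrix.det_permutation, Units.smul_def, ← Int.cast_smul_eq_zsmul F]
    rw [lhs, rhs]
  have := DFunLike.congr_fun key (fun j i => c i j)
  simp only [AlternatingMap.compLinearMap_apply, AlternatingMap.smulRight_apply] at this
  have hT' : (fun j => T fun i => c i j) = fun j => ∑ i, c i j • v i := by
    funext j; simp [T, Fintype.linearCombination_apply]
  rw [hT'] at this
  rw [this]
  congr 1
  have : (Matrix.detRowAlternating fun j (i : Fin m) => c i j) = Matrix.det c.transpose := rfl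
  rw [this, Matrix.det_transpose]

theorem exterior_quotient_product_eq_det_smul
    {F V : Type} [Field F] [AddCommGroup V] [Module F V] {m : ℕ}
    (S : Submodule F V) (α : Fin m → V)
    (B : Module.Basis (Fin m) F (V ⧸ S)) (hB : ∀ i, B i = Submodule.Quotient.mk (α i))
    (c : Matrix (Fin m) (Fin m) F) (σ : Fin m → V) (hσ : ∀ j, σ j ∈ S)
    (γ : Fin m → V) (hγ : ∀ j, γ j = σ j + ∑ i, c i j • α i) :
    (TwoSidedIdeal.span
        (⇑(ExteriorAlgebra.ι F (M := V)) '' (S : Set V))).ringCon.mk'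
          ((List.ofFn fun i => ExteriorAlgebra.ι F (γ i)).prod) =
      (TwoSidedIdeal.span
        (⇑(ExteriorAlgebra.ι F (M := V)) '' (S : Set V))).ringCon.mk'
          (c.det • (List.ofFn fun i => ExteriorAlgebra.ι F (α i)).prod) ∧
    (c.det ≠ 0 →
      (TwoSidedIdeal.span
        (⇑(ExteriorAlgebra.ι F (M := V)) '' (S : Set V))).ringCon.mk'
          ((List.ofFn fun i => ExteriorAlgebra.ι F (γ i)).prod) ≠ 0) := by
  classical
  set I := TwoSidedIdeal.span (⇑(ExteriorAlgebra.ι F (M := V)) '' (S : Set V)) with hI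
  have hrel : ∀ j, I.ringCon (ExteriorAlgebra.ι F (γ j))
      (ExteriorAlgebra.ι F (∑ i, c i j • α i)) := by
    intro j
    rw [TwoSidedIdeal.rel_iff, ← map_sub]
    have h : γ j - ∑ i, c i j • α i = σ j := by rw [hγ j]; abel
    rw [h]
    exact TwoSidedIdeal.subset_span ⟨σ j, hσ j, rfl⟩
  have h2 : ((List.ofFn fun j => ExteriorAlgebra.ι F (∑ i, c i j • α i)).prod) =
      c.det • (List.ofFn fun i => ExteriorAlgebra.ι F (α i)).prod := by
    rw [← ExteriorAlgebra.ιMulti_apply, ← ExteriorAlgebra.ιMulti_apply]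
    exact alt_map_det _ α c
  have key1 : I.ringCon.mk' ((List.ofFn fun i => ExteriorAlgebra.ι F (γ i)).prod) =
      I.ringCon.mk' (c.det • (List.ofFn fun i => ExteriorAlgebra.ι F (α i)).prod) := by
    rw [← h2, map_list_prod, map_list_prod]
    congr 1
    rw [List.map_ofFn, List.map_ofFn]
    congr 1
    funext j
    exact (RingCon.eq _).mpr (hrel j)
  refine ⟨key1, fun hdet hne => ?_⟩
  rw [key1] at hne
  have hx : (c.det • (List.ofFn fun i => ExteriorAlgebra.ι F (α i)).prod) ∈ I := by
    rw [TwoSidedIdeal.mem_iff]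
    have h0 : I.ringCon.mk' (0 : ExteriorAlgebra F V) = 0 := map_zero _
    rw [← h0] at hne
    exact (RingCon.eq _).mp hne
  let φ : ExteriorAlgebra F V →ₐ[F] ExteriorAlgebra F (V ⧸ S) := ExteriorAlgebra.map S.mkQ
  have hIker : φ (c.det • (List.ofFn fun i => ExteriorAlgebra.ι F (α i)).prod) = 0 := by
    have : (c.det • (List.ofFn fun i => ExteriorAlgebra.ι F (α i)).prod) ∈
        TwoSidedIdeal.ker φ.toRingHom := by
      refine TwoSidedIdeal.mem_span_iff.mp hx _ ?_
      rintro y ⟨s, hs, rfl⟩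
      rw [SetLike.mem_coe, TwoSidedIdeal.mem_ker]
      show φ (ExteriorAlgebra.ι F s) = 0
      rw [ExteriorAlgebra.map_apply_ι]
      have : S.mkQ s = 0 := (Submodule.Quotient.mk_eq_zero S).mpr hs
      rw [this, map_zero]
    exact (TwoSidedIdeal.mem_ker _).mp this
  have hφ : φ (c.det • (List.ofFn fun i => ExteriorAlgebra.ι F (α i)).prod) =
      c.det • ExteriorAlgebra.ιMulti F m B := by
    rw [map_smul, ← ExteriorAlgebra.ιMulti_apply, ExteriorAlgebra.map_apply_ιMulti]
    have hcomp : ⇑S.mkQ ∘ α = ⇑B := funext fun i => by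
      rw [Function.comp_apply, Submodule.mkQ_apply, ← hB i]
    rw [hcomp]
  rw [hφ] at hIker
  let g : ∀ i, (V ⧸ S) [⋀^Fin i]→ₗ[F] F :=
    Function.update (fun i => (0 : (V ⧸ S) [⋀^Fin i]→ₗ[F] F)) m B.det
  have hg : ExteriorAlgebra.liftAlternating g (c.det • ExteriorAlgebra.ιMulti F m B) = c.det := by
    rw [map_smul, ExteriorAlgebra.liftAlternating_apply_ιMulti]
    have : g m = B.det := by simp [g]
    rw [this, Module.Basis.det_self, smul_eq_mul, mul_one]
  rw [hIker, map_zero] at hg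
  exact hdet hg.symm
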